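/- arXiv:2003.02687 — 2 statements merged into one kernel-verified Lean document; each statement's English description precedes it below -/
import Mathlib

section
/- Let G be a finite simple graph on n vertices that is not complete, let k = χ(G) be its chromatic number, and let p be a positive integer. For every integer t with 1 ≤ t ≤ k + p: if α_t^{DP}(G ∨ K_p) ≥ t(n+p)/(k+p), then α_t^{DP}(G ∨ K_{p+1}) ≥ t(n+p+1)/(k+p+1). (Equivalently, with B_q denoting the set of t ∈ {1,…,k+q} for which α_t^{DP}(G ∨ K_q) < t(n+q)/(k+q), one has B_{p+1} ⊆ B_p.) -/
open SimpleGraph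

/-- `DPCover G H L` means `(L, H)` is a cover of the graph `G`:
(1) the sets `L u` partition `V(H)`; (2) each `H[L u]` is complete;
(3) for each edge `uv` of `G`, the edges of `H` between `L u` and `L v` form a matching;
(4) there are no edges of `H` between lists of distinct non-adjacent vertices. -/
structure DPCover {V : Type} (G : SimpleGraph V) {W : Type} (H : SimpleGraph W)
    (L : V → Finset W) : Prop where
  partition : ∀ w : W, ∃! v : V, w ∈ L v
  cliques : ∀ v : V, ∀ a ∈ L v, ∀ b ∈ L v, a ≠ b → H.Adj a b
  matching : ∀ ⦃u v : V⦄, G.Adj u v → ∀ a ∈ L u, ∀ b ∈ L v, ∀ b' ∈ L v,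
      H.Adj a b → H.Adj a b' → b = b'
  nonadj : ∀ ⦃u v : V⦄, u ≠ v → ¬ G.Adj u v → ∀ a ∈ L u, ∀ b ∈ L v, ¬ H.Adj a b

/-- A finset is independent in `H` if no two of its elements are adjacent. -/
def IsIndepFinset {W : Type} (H : SimpleGraph W) (S : Finset W) : Prop :=
  ∀ a ∈ S, ∀ b ∈ S, ¬ H.Adj a b

/-- The independence number of `H`. -/
noncomputable def indepNum {W : Type} [Fintype W] (H : SimpleGraph W) : ℕ :=
  sSup {n : ℕ | ∃ S : Finset W, IsIndepFinset H S ∧ S.card = n}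

/-- The DP-chromatic number of `G`: the least `m` such that every `m`-fold cover `(L, H)`
of `G` admits an `H`-coloring, i.e. an independent set in `H` of size `|V(G)|`. -/
noncomputable def chiDP {V : Type} [Fintype V] (G : SimpleGraph V) : ℕ :=
  sInf {m : ℕ | ∀ (W : Type) (_ : Fintype W) (H : SimpleGraph W) (L : V → Finset W),
    DPCover G H L → (∀ v, (L v).card = m) →
    ∃ S : Finset W, IsIndepFinset H S ∧ S.card = Fintype.card V}

/-- The partial DP `t`-chromatic number of `G`: the minimum of the independence number
`α(H)` over all `t`-fold covers `(L, H)` of `G`. -/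
noncomputable def alphaDP {V : Type} [Fintype V] (G : SimpleGraph V) (t : ℕ) : ℕ :=
  sInf {n : ℕ | ∃ (W : Type) (_ : Fintype W) (H : SimpleGraph W) (L : V → Finset W),
    DPCover G H L ∧ (∀ v, (L v).card = t) ∧ _root_.indepNum H = n}

/-- A graph `G` is partially DP-nice if `α_t^{DP}(G) ≥ t|V(G)|/χ_DP(G)` for all
`t ∈ {1, …, χ_DP(G)}`. -/
def PartiallyDPNice {V : Type} [Fintype V] (G : SimpleGraph V) : Prop :=
  ∀ t : ℕ, 1 ≤ t → t ≤ chiDP G →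
    (t * Fintype.card V : ℚ) / (chiDP G : ℚ) ≤ (alphaDP G t : ℚ)

/-- The join `G ∨ K_p` of `G` with the complete graph `K_p`: disjoint copies of `G` and
`K_p` together with all edges between them. -/
def joinComplete {V : Type} (G : SimpleGraph V) (p : ℕ) : SimpleGraph (V ⊕ Fin p) where
  Adj x y :=
    match x, y with
    | .inl a, .inl b => G.Adj a b
    | .inr a, .inr b => a ≠ b
    | .inl _, .inr _ => True
    | .inr _, .inl _ => True
  symm := by
    constructor
    rintro (a | a) (b | b) h
    · exact G.symm.symm _ _ h
    · trivial
    · trivial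
    · exact Ne.symm h
  loopless := by
    constructor
    rintro (a | a) h
    · exact G.loopless.irrefl a h
    · exact h rfl

/-- The chromatic number of a graph: the least `n` such that `G` is `n`-colorable. -/
noncomputable def chromNum {V : Type} (G : SimpleGraph V) : ℕ :=
  sInf {n : ℕ | G.Colorable n}

lemma indepNum_comap_le {W : Type} [Fintype W] (H : SimpleGraph W) (p : W → Prop)
    [DecidablePred p] :
    _root_.indepNum (H.comap (Subtype.val : {w // p w} → W)) ≤ _root_.indepNum H := by
  classical
  apply csSup_le_csSup
  · refine ⟨Fintype.card W, fun n hn => ?_⟩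
    obtain ⟨S, _, hcard⟩ := hn
    simpa [← hcard] using S.card_le_univ.trans_eq Finset.card_univ
  · exact ⟨0, ∅, fun a ha => absurd ha (Finset.notMem_empty a), rfl⟩
  · rintro n ⟨S, hS, rfl⟩
    refine ⟨S.image Subtype.val, ?_, Finset.card_image_of_injective _ Subtype.val_injective⟩
    intro a ha b hb hab
    simp only [Finset.mem_image] at ha hb
    obtain ⟨a', ha', rfl⟩ := ha
    obtain ⟨b', hb', rfl⟩ := hb
    exact hS a' ha' b' hb' hab

lemma coverSet_nonempty {V : Type} [Fintype V] (G : SimpleGraph V) (t : ℕ) :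
    {n : ℕ | ∃ (W : Type) (_ : Fintype W) (H : SimpleGraph W) (L : V → Finset W),
      DPCover G H L ∧ (∀ v, (L v).card = t) ∧ _root_.indepNum H = n}.Nonempty := by
  classical
  refine ⟨_, V × Fin t, inferInstance,
    ⟨fun a b => a.1 = b.1 ∧ a ≠ b, ?_, ?_⟩,
    fun v => {v} ×ˢ Finset.univ, ⟨?_, ?_, ?_, ?_⟩, ?_, rfl⟩
  · constructor; rintro a b ⟨h1, h2⟩; exact ⟨h1.symm, h2.symm⟩
  · constructor; rintro a ⟨-, h⟩; exact h rfl
  · intro w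
    refine ⟨w.1, by simp [Finset.mem_product], ?_⟩
    intro v hv
    simp only [Finset.mem_product, Finset.mem_singleton] at hv
    exact hv.1.symm
  · intro v a ha b hb hab
    simp only [Finset.mem_product, Finset.mem_singleton] at ha hb
    exact ⟨ha.1.trans hb.1.symm, hab⟩
  · intro u v huv a ha b hb b' hb' h1 h2
    simp only [Finset.mem_product, Finset.mem_singleton] at ha hb
    exact absurd (ha.1 ▸ hb.1 ▸ h1.1) huv.ne
  · intro u v hne hnadj a ha b hb hadj
    simp only [Finset.mem_product, Finset.mem_singleton] at ha hb
    exact hne (ha.1 ▸ hb.1 ▸ hadj.1)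
  · intro v; simp

lemma alphaDP_le_of_induced {V V' : Type} [Fintype V] [Fintype V']
    (G : SimpleGraph V) (G' : SimpleGraph V') (f : V → V')
    (hinj : Function.Injective f)
    (hadj : ∀ u v, G.Adj u v ↔ G'.Adj (f u) (f v))
    (t m : ℕ)
    (hm : m ∈ {n : ℕ | ∃ (W : Type) (_ : Fintype W) (H : SimpleGraph W) (L : V' → Finset W),
      DPCover G' H L ∧ (∀ v, (L v).card = t) ∧ _root_.indepNum H = n}) :
    alphaDP G t ≤ m := by
  classical
  obtain ⟨W, _, H, L, hcov, hcard, hind⟩ := hm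
  set p : W → Prop := fun w => ∃ v : V, w ∈ L (f v) with hp
  let H' : SimpleGraph {w // p w} := H.comap Subtype.val
  let L' : V → Finset {w // p w} := fun v => (L (f v)).subtype p
  have hmem : ∀ (v : V) (a : {w // p w}), a ∈ L' v ↔ (a : W) ∈ L (f v) := by
    intro v a; simp [L', Finset.mem_subtype]
  have hcard' : ∀ v, (L' v).card = t := by
    intro v
    rw [← hcard (f v)]
    show ((L (f v)).subtype p).card = _
    rw [Finset.card_subtype]
    congr 1
    apply Finset.filter_true_of_mem
    intro w hw
    exact ⟨v, hw⟩
  have hH' : ∀ a b : {w // p w}, H'.Adj a b ↔ H.Adj a.val b.val := fun a b => Iff.rfl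
  have hcov' : DPCover G H' L' := by
    constructor
    · intro w
      obtain ⟨v0, hv0⟩ := w.2
      refine ⟨v0, (hmem v0 w).mpr hv0, ?_⟩
      intro v hv
      obtain ⟨u, hu, huniq⟩ := hcov.partition w.val
      exact hinj ((huniq _ ((hmem v w).mp hv)).trans (huniq _ hv0).symm)
    · intro v a ha b hb hab
      exact hcov.cliques (f v) a.val ((hmem v a).mp ha) b.val ((hmem v b).mp hb)
        (fun h => hab (Subtype.ext h))
    · intro u v huv a ha b hb b' hb' h1 h2
      exact Subtype.ext (hcov.matching ((hadj u v).mp huv) a.val ((hmem u a).mp ha)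
        b.val ((hmem v b).mp hb) b'.val ((hmem v b').mp hb') h1 h2)
    · intro u v hne hnadj a ha b hb
      exact hcov.nonadj (fun h => hne (hinj h)) (fun h => hnadj ((hadj u v).mpr h))
        a.val ((hmem u a).mp ha) b.val ((hmem v b).mp hb)
  have h1 : alphaDP G t ≤ _root_.indepNum H' :=
    Nat.sInf_le ⟨{w // p w}, inferInstance, H', L', hcov', hcard', rfl⟩
  have h2 : _root_.indepNum H' ≤ _root_.indepNum H := indepNum_comap_le H p
  omega

lemma joinComplete_adj_map {V : Type} (G : SimpleGraph V) (p : ℕ) :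
    ∀ u v : V ⊕ Fin p, (joinComplete G p).Adj u v ↔
      (joinComplete G (p+1)).Adj (Sum.map id Fin.castSucc u) (Sum.map id Fin.castSucc v) := by
  rintro (a | a) (b | b)
  · exact Iff.rfl
  · exact Iff.rfl
  · exact Iff.rfl
  · show a ≠ b ↔ Fin.castSucc a ≠ Fin.castSucc b
    simp [Fin.castSucc_inj]

/-- For a non-complete graph `G` on `n` vertices with `k = χ(G)`, and a positive
integer `p`: for every `t ∈ {1, …, k + p}`, if `α_t^{DP}(G ∨ K_p) ≥ t(n+p)/(k+p)`,
then `α_t^{DP}(G ∨ K_{p+1}) ≥ t(n+p+1)/(k+p+1)`; i.e. `B_{p+1} ⊆ B_p`. -/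
theorem alphaDP_joinComplete_mono {V : Type} [Fintype V] (G : SimpleGraph V)
    (hnoncomplete : ∃ u v : V, u ≠ v ∧ ¬ G.Adj u v)
    (p : ℕ) (hp : 0 < p) (t : ℕ) (ht1 : 1 ≤ t) (ht2 : t ≤ chromNum G + p)
    (h : ((t * (Fintype.card V + p) : ℕ) : ℚ) / ((chromNum G + p : ℕ) : ℚ) ≤
      (alphaDP (joinComplete G p) t : ℚ)) :
    ((t * (Fintype.card V + p + 1) : ℕ) : ℚ) / ((chromNum G + p + 1 : ℕ) : ℚ) ≤
      (alphaDP (joinComplete G (p + 1)) t : ℚ) := by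
    classical
  have hk : chromNum G ≤ Fintype.card V := Nat.sInf_le G.colorable_of_fintype
  have hmono : alphaDP (joinComplete G p) t ≤ alphaDP (joinComplete G (p+1)) t := by
    have hne := coverSet_nonempty (joinComplete G (p+1)) t
    exact alphaDP_le_of_induced _ _ (Sum.map id Fin.castSucc)
      (Function.Injective.sumMap Function.injective_id (Fin.castSucc_injective p))
      (joinComplete_adj_map G p) t _ (Nat.sInf_mem hne)
  set n := Fintype.card V
  set k := chromNum G
  have hd1 : (0 : ℚ) < ((k + p : ℕ) : ℚ) := by
    have : 0 < k + p := by omega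
    exact_mod_cast this
  have hd2 : (0 : ℚ) < ((k + p + 1 : ℕ) : ℚ) := by
    have : 0 < k + p + 1 := by omega
    exact_mod_cast this
  have key : ((t * (n + p + 1) : ℕ) : ℚ) / ((k + p + 1 : ℕ) : ℚ) ≤
      ((t * (n + p) : ℕ) : ℚ) / ((k + p : ℕ) : ℚ) := by
    rw [div_le_div_iff₀ hd2 hd1]
    have hkn : (k : ℚ) ≤ (n : ℚ) := by exact_mod_cast hk
    have ht : (0 : ℚ) ≤ (t : ℚ) := by positivity
    push_cast
    nlinarith [mul_nonneg ht (sub_nonneg.mpr hkn)]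
  refine key.trans (h.trans ?_)
  exact_mod_cast hmono
end

section
/- For any finite simple graph G, there exists a positive integer p such that the join G ∨ K_p is partially DP-nice. -/
open SimpleGraph

section Aux

attribute [local instance] Classical.propDecidable

variable {V' W : Type}

noncomputable def vertOf {G' : SimpleGraph V'} {H : SimpleGraph W} {L : V' → Finset W}
    (hcov : DPCover G' H L) (w : W) : V' := (hcov.partition w).choose

lemma vertOf_mem {G' : SimpleGraph V'} {H : SimpleGraph W} {L : V' → Finset W}
    (hcov : DPCover G' H L) (w : W) : w ∈ L (vertOf hcov w) :=
  (hcov.partition w).choose_spec.1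

lemma vertOf_eq {G' : SimpleGraph V'} {H : SimpleGraph W} {L : V' → Finset W}
    (hcov : DPCover G' H L) {w : W} {v : V'} (h : w ∈ L v) : vertOf hcov w = v :=
  ((hcov.partition w).choose_spec.2 v h).symm

def Greedyable (G' : SimpleGraph V') (t : ℕ) : List V' → Prop
  | [] => True
  | a :: l => ((l.toFinset.filter fun v => G'.Adj a v).card < t) ∧ Greedyable G' t l

lemma greedyable_of_len_le {G' : SimpleGraph V'} {t : ℕ} :
    ∀ l : List V', l.length ≤ t → Greedyable G' t l := by
  intro l
  induction l with
  | nil => intro _; trivial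
  | cons a l ih =>
    intro hlen
    refine ⟨?_, ih (by simpa using Nat.le_of_succ_le hlen)⟩
    calc (l.toFinset.filter fun v => G'.Adj a v).card ≤ l.toFinset.card :=
          Finset.card_filter_le _ _
      _ ≤ l.length := l.toFinset_card_le
      _ < (a :: l).length := by simp
      _ ≤ t := hlen

lemma greedy_list {G' : SimpleGraph V'} {H : SimpleGraph W} {L : V' → Finset W} {t : ℕ}
    (hcov : DPCover G' H L) (hcard : ∀ v, (L v).card = t) :
    ∀ l : List V', l.Nodup → Greedyable G' t l →
      ∃ S : Finset W, IsIndepFinset H S ∧ S.card = l.length ∧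
        (∀ w ∈ S, vertOf hcov w ∈ l) ∧ Set.InjOn (vertOf hcov) S := by
  intro l
  induction l with
  | nil => intro _ _; exact ⟨∅, by simp [IsIndepFinset], by simp, by simp, by simp [Set.InjOn]⟩
  | cons a l ih =>
    intro hnd hg
    obtain ⟨S, hSind, hScard, hSsupp, hSinj⟩ := ih (List.Nodup.of_cons hnd) hg.2
    have hal : a ∉ l := by simpa using (List.nodup_cons.mp hnd).1
    -- key adjacency fact
    have hAdjOf : ∀ w ∈ S, ∀ b ∈ L a, H.Adj w b → G'.Adj a (vertOf hcov w) := by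
      intro w hw b hb hadj
      by_contra hna
      have hvl : vertOf hcov w ∈ l := hSsupp w hw
      have hne : vertOf hcov w ≠ a := fun h => hal (h ▸ hvl)
      exact hcov.nonadj hne (fun h => hna h.symm) w (vertOf_mem hcov w) b hb hadj
    set B := (L a).filter (fun b => ∃ w ∈ S, H.Adj w b) with hB
    have hBsub : B ⊆ L a := Finset.filter_subset _ _
    have key : B.card ≤ (l.toFinset.filter fun v => G'.Adj a v).card := by
      apply Finset.card_le_card_of_injOn
        (fun b => if h : ∃ w ∈ S, H.Adj w b then vertOf hcov h.choose else a)
      · intro b hb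
        obtain ⟨hbL, hex⟩ := Finset.mem_filter.mp hb
        dsimp only
        rw [dif_pos hex]
        obtain ⟨hwS, hwadj⟩ := hex.choose_spec
        refine Finset.mem_filter.mpr ⟨List.mem_toFinset.mpr (hSsupp _ hwS), ?_⟩
        exact hAdjOf _ hwS b hbL hwadj
      · intro b₁ hb₁ b₂ hb₂ heq
        obtain ⟨hb₁L, hex₁⟩ := Finset.mem_filter.mp hb₁
        obtain ⟨hb₂L, hex₂⟩ := Finset.mem_filter.mp hb₂
        simp only at heq
        rw [dif_pos hex₁, dif_pos hex₂] at heq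
        obtain ⟨hw₁S, hw₁adj⟩ := hex₁.choose_spec
        obtain ⟨hw₂S, hw₂adj⟩ := hex₂.choose_spec
        have hww : hex₁.choose = hex₂.choose := hSinj hw₁S hw₂S heq
        have hadj : G'.Adj (vertOf hcov hex₁.choose) a :=
          (hAdjOf _ hw₁S b₁ hb₁L hw₁adj).symm
        exact hcov.matching hadj hex₁.choose (vertOf_mem hcov _) b₁ hb₁L b₂ hb₂L
          hw₁adj (hww ▸ hw₂adj)
    have hlt : B.card < (L a).card := by
      rw [hcard a]; exact lt_of_le_of_lt key hg.1
    have hne : (L a \ B).Nonempty := by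
      rw [← Finset.card_pos, Finset.card_sdiff_of_subset hBsub]; omega
    obtain ⟨b, hbmem⟩ := hne
    obtain ⟨hbLa, hbB⟩ := Finset.mem_sdiff.mp hbmem
    have hfree : ∀ w ∈ S, ¬ H.Adj w b := fun w hw hadj =>
      hbB (Finset.mem_filter.mpr ⟨hbLa, ⟨w, hw, hadj⟩⟩)
    have hvb : vertOf hcov b = a := vertOf_eq hcov hbLa
    have hbS : b ∉ S := fun h => hal (hvb ▸ hSsupp b h)
    refine ⟨insert b S, ?_, ?_, ?_, ?_⟩
    · intro x hx y hy
      rcases Finset.mem_insert.mp hx with rfl | hx' <;>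
        rcases Finset.mem_insert.mp hy with rfl | hy'
      · exact H.irrefl
      · exact fun h => hfree y hy' (h.symm)
      · exact hfree x hx'
      · exact hSind x hx' y hy'
    · rw [Finset.card_insert_of_notMem hbS, hScard]; simp
    · intro w hw
      rcases Finset.mem_insert.mp hw with rfl | hw'
      · rw [hvb]; exact List.mem_cons_self
      · exact List.mem_cons_of_mem _ (hSsupp w hw')
    · intro x hx y hy hxy
      simp only [Finset.coe_insert, Set.mem_insert_iff, Finset.mem_coe] at hx hy
      rcases hx with rfl | hx' <;> rcases hy with rfl | hy'
      · rfl
      · exact absurd ((hxy.symm.trans hvb) ▸ hSsupp y hy') hal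
      · exact absurd ((hxy.trans hvb) ▸ hSsupp x hx') hal
      · exact hSinj hx' hy' hxy



/-! ### indepNum and alphaDP basics -/

lemma le_indepNum {W : Type} [Fintype W] (H : SimpleGraph W) (S : Finset W)
    (h : IsIndepFinset H S) : S.card ≤ _root_.indepNum H := by
  apply le_csSup
  · refine ⟨Fintype.card W, ?_⟩
    rintro n ⟨T, _, rfl⟩
    exact T.card_le_univ.trans_eq (Finset.card_univ)
  · exact ⟨S, h, rfl⟩

/-! ### The canonical cover -/

def canonH (G' : SimpleGraph V') (t : ℕ) : SimpleGraph (V' × Fin t) where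
  Adj a b := (a.1 = b.1 ∧ a.2 ≠ b.2) ∨ (G'.Adj a.1 b.1 ∧ a.2 = b.2)
  symm := by
    constructor
    rintro ⟨u, i⟩ ⟨v, j⟩ (⟨h1, h2⟩ | ⟨h1, h2⟩)
    · exact Or.inl ⟨h1.symm, h2.symm⟩
    · exact Or.inr ⟨h1.symm, h2.symm⟩
  loopless := by
    constructor
    rintro ⟨u, i⟩ (⟨_, h⟩ | ⟨h, _⟩)
    · exact h rfl
    · exact G'.irrefl h

def canonL (t : ℕ) (v : V') : Finset (V' × Fin t) := {v} ×ˢ Finset.univ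

lemma mem_canonL {t : ℕ} {v : V'} {a : V' × Fin t} : a ∈ canonL t v ↔ a.1 = v := by
  constructor
  · intro h; exact Finset.mem_singleton.mp (Finset.mem_product.mp h).1
  · intro h; exact Finset.mem_product.mpr ⟨Finset.mem_singleton.mpr h, Finset.mem_univ _⟩

lemma canonL_card [Fintype V'] (t : ℕ) (v : V') : (canonL t v : Finset (V' × Fin t)).card = t := by
  simp [canonL]

lemma canon_cover (G' : SimpleGraph V') (t : ℕ) : DPCover G' (canonH G' t) (canonL t) := by
  constructor
  · intro w
    exact ⟨w.1, mem_canonL.mpr rfl, fun v hv => (mem_canonL.mp hv).symm⟩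
  · intro v a ha b hb hab
    have h1 : a.1 = b.1 := (mem_canonL.mp ha).trans (mem_canonL.mp hb).symm
    have h2 : a.2 ≠ b.2 := fun h => hab (Prod.ext h1 h)
    exact Or.inl ⟨h1, h2⟩
  · rintro u v huv a ha b hb b' hb' (⟨h1, _⟩ | ⟨_, h2⟩) hadj
    · exact absurd ((mem_canonL.mp ha).symm.trans ((h1.trans (mem_canonL.mp hb)))) huv.ne
    · rcases hadj with ⟨h1', _⟩ | ⟨_, h2'⟩
      · exact absurd ((mem_canonL.mp ha).symm.trans ((h1'.trans (mem_canonL.mp hb')))) huv.ne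
      · exact Prod.ext ((mem_canonL.mp hb).trans (mem_canonL.mp hb').symm) (h2.symm.trans h2')
  · rintro u v hne hnadj a ha b hb (⟨h1, _⟩ | ⟨h1, _⟩)
    · exact hne ((mem_canonL.mp ha).symm.trans (h1.trans (mem_canonL.mp hb)))
    · exact hnadj ((mem_canonL.mp ha) ▸ (mem_canonL.mp hb) ▸ h1)

/-! ### pigeonhole: an independent set of full size meets every list -/

lemma full_indep_meets_lists {G' : SimpleGraph V'} [Fintype V'] {H : SimpleGraph W}
    {L : V' → Finset W} (hcov : DPCover G' H L) {S : Finset W}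
    (hS : IsIndepFinset H S) (hScard : S.card = Fintype.card V') :
    ∀ v, ∃ w ∈ S, w ∈ L v := by
  have hinj : Set.InjOn (vertOf hcov) S := by
    intro x hx y hy hxy
    by_contra hne
    exact hS x hx y hy (hcov.cliques (vertOf hcov x) x (vertOf_mem hcov x) y
      (hxy ▸ vertOf_mem hcov y) hne)
  have himg : S.image (vertOf hcov) = Finset.univ :=
    Finset.eq_univ_of_card _ (by rw [Finset.card_image_of_injOn hinj, hScard])
  intro v
  have : v ∈ S.image (vertOf hcov) := himg ▸ Finset.mem_univ v
  obtain ⟨w, hw, hwv⟩ := Finset.mem_image.mp this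
  exact ⟨w, hw, hwv ▸ vertOf_mem hcov w⟩

/-! ### clique lower bound for chiDP -/

lemma clique_card_le_of_chiMem {G' : SimpleGraph V'} [Fintype V'] (Q : Finset V')
    (hQ : ∀ u ∈ Q, ∀ v ∈ Q, u ≠ v → G'.Adj u v) {m : ℕ}
    (hm : ∀ (W : Type) (_ : Fintype W) (H : SimpleGraph W) (L : V' → Finset W),
      DPCover G' H L → (∀ v, (L v).card = m) →
      ∃ S : Finset W, IsIndepFinset H S ∧ S.card = Fintype.card V') :
    Q.card ≤ m := by
  obtain ⟨S, hSind, hScard⟩ := hm (V' × Fin m) inferInstance (canonH G' m) (canonL m)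
    (canon_cover G' m) (canonL_card m)
  have hmeet := full_indep_meets_lists (canon_cover G' m) hSind hScard
  have hcard : Q.card ≤ (Finset.univ : Finset (Fin m)).card := by
    apply Finset.card_le_card_of_injOn (fun v => ((hmeet v).choose).2)
      (fun _ _ => Finset.mem_univ _)
    intro u hu v hv huv
    by_contra hne
    have hadj := hQ u hu v hv hne
    obtain ⟨hwuS, hwuL⟩ := (hmeet u).choose_spec
    obtain ⟨hwvS, hwvL⟩ := (hmeet v).choose_spec
    apply hSind _ hwuS _ hwvS
    exact Or.inr ⟨by rw [mem_canonL.mp hwuL, mem_canonL.mp hwvL]; exact hadj, huv⟩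
  simpa using hcard


/-! ### subcovers: restricting a cover along an induced embedding -/

lemma subcover_indep {V₁ V₂ : Type} [Fintype V₂] {W : Type}
    {G₁ : SimpleGraph V₁} {G₂ : SimpleGraph V₂} {t : ℕ}
    (e : V₂ → V₁) (hinj : Function.Injective e)
    (hadj : ∀ u v, G₂.Adj u v ↔ G₁.Adj (e u) (e v))
    {H : SimpleGraph W} {L : V₁ → Finset W} (hcov : DPCover G₁ H L)
    (K : V₂ → Finset W) (hK : ∀ v, K v ⊆ L (e v)) (hKcard : ∀ v, (K v).card = t)
    (hchi : ∀ (W₀ : Type) (_ : Fintype W₀) (H₀ : SimpleGraph W₀) (L₀ : V₂ → Finset W₀),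
      DPCover G₂ H₀ L₀ → (∀ v, (L₀ v).card = t) →
      ∃ S₀ : Finset W₀, IsIndepFinset H₀ S₀ ∧ S₀.card = Fintype.card V₂) :
    ∃ S : Finset W, IsIndepFinset H S ∧ S.card = Fintype.card V₂ ∧
      ∀ w ∈ S, ∃ v, w ∈ K v := by
  classical
  set W₀ := (Σ v : V₂, {x : W // x ∈ K v}) with hW₀
  let H₀ : SimpleGraph W₀ := SimpleGraph.comap (fun a => a.2.1) H
  let L₀ : V₂ → Finset W₀ := fun v => (K v).attach.map
    ⟨fun x => (⟨v, x⟩ : W₀), fun x y h => by cases h; rfl⟩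
  have memL₀ : ∀ (v : V₂) (a : W₀), a ∈ L₀ v ↔ a.1 = v := by
    intro v a
    constructor
    · intro h
      obtain ⟨x, _, rfl⟩ := Finset.mem_map.mp h
      rfl
    · rintro rfl
      exact Finset.mem_map.mpr ⟨a.2, Finset.mem_attach _ _, rfl⟩
  have hL₀card : ∀ v, (L₀ v).card = t := by
    intro v; rw [Finset.card_map, Finset.card_attach, hKcard]
  have hcov₀ : DPCover G₂ H₀ L₀ := by
    constructor
    · intro w
      exact ⟨w.1, (memL₀ _ _).mpr rfl, fun v hv => ((memL₀ _ _).mp hv).symm⟩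
    · intro v a ha b hb hab
      have ha1 : a.1 = v := (memL₀ _ _).mp ha
      have hb1 : b.1 = v := (memL₀ _ _).mp hb
      have hne : (a.2 : W) ≠ (b.2 : W) := by
        intro h
        apply hab
        cases a; cases b
        cases ha1; cases hb1.symm
        cases Subtype.ext h
        rfl
      exact hcov.cliques (e v) _ (hK v (ha1 ▸ a.2.2)) _ (hK v (hb1 ▸ b.2.2)) hne
    · intro u v huv a ha b hb b' hb' h1 h2
      have ha1 : a.1 = u := (memL₀ _ _).mp ha
      have hb1 : b.1 = v := (memL₀ _ _).mp hb
      have hb'1 : b'.1 = v := (memL₀ _ _).mp hb'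
      have heq : (b.2 : W) = (b'.2 : W) :=
        hcov.matching ((hadj u v).mp huv) _ (hK u (ha1 ▸ a.2.2)) _ (hK v (hb1 ▸ b.2.2))
          _ (hK v (hb'1 ▸ b'.2.2)) h1 h2
      cases b; cases b'
      cases hb1; cases hb'1.symm
      cases Subtype.ext heq
      rfl
    · intro u v hne hnadj a ha b hb
      have ha1 : a.1 = u := (memL₀ _ _).mp ha
      have hb1 : b.1 = v := (memL₀ _ _).mp hb
      exact hcov.nonadj (fun h => hne (hinj h)) (fun h => hnadj ((hadj u v).mpr h))
        _ (hK u (ha1 ▸ a.2.2)) _ (hK v (hb1 ▸ b.2.2))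
  obtain ⟨S₀, hS₀ind, hS₀card⟩ := hchi W₀ inferInstance H₀ L₀ hcov₀ hL₀card
  have hinj₀ : Set.InjOn (fun (a : W₀) => (a.2 : W)) S₀ := by
    intro a _ b _ hab
    simp only at hab
    have h1 : (a.2 : W) ∈ L (e a.1) := hK _ a.2.2
    have h2 : (a.2 : W) ∈ L (e b.1) := hab ▸ hK _ b.2.2
    have : e a.1 = e b.1 := by
      have hu := (hcov.partition (a.2 : W)).choose_spec.2
      exact (hu _ h1).trans (hu (e b.1) h2).symm
    have h3 : a.1 = b.1 := hinj this
    cases a; cases b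
    cases h3
    cases Subtype.ext hab
    rfl
  refine ⟨S₀.image (fun a => (a.2 : W)), ?_, ?_, ?_⟩
  · intro x hx y hy hxy
    obtain ⟨a, ha, rfl⟩ := Finset.mem_image.mp hx
    obtain ⟨b, hb, rfl⟩ := Finset.mem_image.mp hy
    exact hS₀ind a ha b hb hxy
  · rw [Finset.card_image_of_injOn hinj₀, hS₀card]
  · intro w hw
    obtain ⟨a, _, rfl⟩ := Finset.mem_image.mp hw
    exact ⟨a.1, a.2.2⟩


/-! ### basic chiDP facts -/

lemma card_mem_chi {V' : Type} [Fintype V'] (G' : SimpleGraph V') :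
    ∀ (W : Type) (_ : Fintype W) (H : SimpleGraph W) (L : V' → Finset W),
      DPCover G' H L → (∀ v, (L v).card = Fintype.card V') →
      ∃ S : Finset W, IsIndepFinset H S ∧ S.card = Fintype.card V' := by
  intro W _ H L hcov hcard
  obtain ⟨S, hind, hcardS, -, -⟩ := greedy_list hcov hcard Finset.univ.toList
    (Finset.nodup_toList _)
    (greedyable_of_len_le _ (by rw [Finset.length_toList, Finset.card_univ]))
  exact ⟨S, hind, by rw [hcardS, Finset.length_toList, Finset.card_univ]⟩

lemma chiDP_mem {V' : Type} [Fintype V'] (G' : SimpleGraph V') :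
    ∀ (W : Type) (_ : Fintype W) (H : SimpleGraph W) (L : V' → Finset W),
      DPCover G' H L → (∀ v, (L v).card = chiDP G') →
      ∃ S : Finset W, IsIndepFinset H S ∧ S.card = Fintype.card V' := by
  have hne : Set.Nonempty {m : ℕ | ∀ (W : Type) (_ : Fintype W) (H : SimpleGraph W)
      (L : V' → Finset W), DPCover G' H L → (∀ v, (L v).card = m) →
      ∃ S : Finset W, IsIndepFinset H S ∧ S.card = Fintype.card V'} :=
    ⟨Fintype.card V', card_mem_chi G'⟩
  exact Nat.sInf_mem hne

lemma chiDP_le_card {V' : Type} [Fintype V'] (G' : SimpleGraph V') :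
    chiDP G' ≤ Fintype.card V' :=
  Nat.sInf_le (card_mem_chi G')

/-! ### alphaDP lower bounds -/

lemma le_alphaDP {V' : Type} [Fintype V'] (G' : SimpleGraph V') (t b : ℕ)
    (h : ∀ (W : Type) (_ : Fintype W) (H : SimpleGraph W) (L : V' → Finset W),
      DPCover G' H L → (∀ v, (L v).card = t) →
      ∃ S : Finset W, IsIndepFinset H S ∧ b ≤ S.card) :
    b ≤ alphaDP G' t := by
  have hall : ∀ n ∈ {n : ℕ | ∃ (W : Type) (_ : Fintype W) (H : SimpleGraph W)
      (L : V' → Finset W), DPCover G' H L ∧ (∀ v, (L v).card = t) ∧ _root_.indepNum H = n}, b ≤ n := by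
    rintro n ⟨W, iW, H, L, hcov, hcards, rfl⟩
    obtain ⟨S, hind, hb⟩ := h W iW H L hcov hcards
    exact hb.trans (le_indepNum H S hind)
  have hne : Set.Nonempty {n : ℕ | ∃ (W : Type) (_ : Fintype W) (H : SimpleGraph W)
      (L : V' → Finset W), DPCover G' H L ∧ (∀ v, (L v).card = t) ∧ _root_.indepNum H = n} :=
    ⟨_root_.indepNum (canonH G' t), V' × Fin t, inferInstance, canonH G' t, canonL t,
      canon_cover G' t, canonL_card t, rfl⟩
  exact hall _ (Nat.sInf_mem hne)

lemma alphaDP_ge_min {V' : Type} [Fintype V'] (G' : SimpleGraph V') (t : ℕ) :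
    min (Fintype.card V') t ≤ alphaDP G' t := by
  apply le_alphaDP
  intro W _ H L hcov hcards
  obtain ⟨A, hAsub, hAcard⟩ := Finset.exists_subset_card_eq (s := (Finset.univ : Finset V'))
    (n := min (Fintype.card V') t) (by rw [Finset.card_univ]; exact min_le_left _ _)
  obtain ⟨S, hind, hcardS, -, -⟩ := greedy_list hcov hcards A.toList
    (Finset.nodup_toList _)
    (greedyable_of_len_le _ (by rw [Finset.length_toList, hAcard]; exact min_le_right _ _))
  exact ⟨S, hind, by rw [hcardS, Finset.length_toList, hAcard]⟩

lemma alphaDP_ge_pair {V' : Type} [Fintype V'] {G' : SimpleGraph V'} {u v : V'}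
    (hne : u ≠ v) (hnadj : ¬ G'.Adj u v) (t : ℕ) (ht : 1 ≤ t) :
    min (Fintype.card V') (t + 1) ≤ alphaDP G' t := by
  have hcard2 : 2 ≤ Fintype.card V' := by
    have := Finset.card_le_univ ({u, v} : Finset V')
    rwa [Finset.card_pair hne] at this
  apply le_alphaDP
  intro W _ H L hcov hcards
  obtain ⟨A, hAsub, hAcard⟩ := Finset.exists_subset_card_eq (s := Finset.univ \ {u, v})
    (n := min (Fintype.card V' - 2) (t - 1)) (by
      rw [Finset.card_sdiff_of_subset (Finset.subset_univ _), Finset.card_pair hne, Finset.card_univ]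
      exact min_le_left _ _)
  have huA : u ∉ A := fun h => by
    have := hAsub h; rw [Finset.mem_sdiff] at this; exact this.2 (by simp)
  have hvA : v ∉ A := fun h => by
    have := hAsub h; rw [Finset.mem_sdiff] at this; exact this.2 (by simp)
  have hgr : Greedyable G' t (u :: v :: A.toList) := by
    refine ⟨?_, ?_, greedyable_of_len_le _ ?_⟩
    · have hsub : ((v :: A.toList).toFinset.filter fun y => G'.Adj u y) ⊆ A := by
        intro y hy
        rw [Finset.mem_filter, List.toFinset_cons, Finset.mem_insert] at hy
        rcases hy.1 with rfl | h
        · exact absurd hy.2 hnadj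
        · rw [List.mem_toFinset, Finset.mem_toList] at h; exact h
      calc _ ≤ A.card := Finset.card_le_card hsub
        _ ≤ t - 1 := hAcard ▸ min_le_right _ _
        _ < t := by omega
    · have hsub : (A.toList.toFinset.filter fun y => G'.Adj v y) ⊆ A := by
        intro y hy
        rw [Finset.mem_filter, List.mem_toFinset, Finset.mem_toList] at hy
        exact hy.1
      calc _ ≤ A.card := Finset.card_le_card hsub
        _ ≤ t - 1 := hAcard ▸ min_le_right _ _
        _ < t := by omega
    · rw [Finset.length_toList, hAcard]
      exact (min_le_right _ _).trans (by omega)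
  have hnd : (u :: v :: A.toList).Nodup := by
    refine List.nodup_cons.mpr ⟨?_, List.nodup_cons.mpr ⟨?_, Finset.nodup_toList _⟩⟩
    · simp only [List.mem_cons, Finset.mem_toList]
      rintro (h | h)
      · exact hne h
      · exact huA h
    · rw [Finset.mem_toList]; exact hvA
  obtain ⟨S, hind, hcardS, -, -⟩ := greedy_list hcov hcards _ hnd hgr
  refine ⟨S, hind, ?_⟩
  rw [hcardS]
  simp only [List.length_cons, Finset.length_toList, hAcard]
  omega


/-! ### chiDP facts for joins with complete graphs -/

variable {V : Type} [Fintype V]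

lemma join_adj_inr_inr {G : SimpleGraph V} {p : ℕ} {i j : Fin p} :
    (joinComplete G p).Adj (Sum.inr i) (Sum.inr j) ↔ i ≠ j := Iff.rfl

lemma chi_join_ge (G : SimpleGraph V) (p : ℕ) : p ≤ chiDP (joinComplete G p) := by
  have h := clique_card_le_of_chiMem (G' := joinComplete G p)
    ((Finset.univ : Finset (Fin p)).map ⟨Sum.inr, Sum.inr_injective⟩) ?_ (chiDP_mem _)
  · rwa [Finset.card_map, Finset.card_univ, Fintype.card_fin] at h
  · intro a ha b hb hab
    obtain ⟨i, -, rfl⟩ := Finset.mem_map.mp ha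
    obtain ⟨j, -, rfl⟩ := Finset.mem_map.mp hb
    exact fun h => hab (congrArg Sum.inr h)

lemma chi_join_card_sum (G : SimpleGraph V) (p : ℕ) :
    chiDP (joinComplete G p) ≤ Fintype.card V + p := by
  have := chiDP_le_card (joinComplete G p)
  rwa [Fintype.card_sum, Fintype.card_fin] at this

lemma chi_join_complete (G : SimpleGraph V) (hG : ∀ u v : V, u ≠ v → G.Adj u v) (p : ℕ) :
    chiDP (joinComplete G p) = Fintype.card V + p := by
  refine le_antisymm (chi_join_card_sum G p) ?_
  have h := clique_card_le_of_chiMem (G' := joinComplete G p)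
    (Finset.univ : Finset (V ⊕ Fin p)) ?_ (chiDP_mem _)
  · rwa [Finset.card_univ, Fintype.card_sum, Fintype.card_fin] at h
  · rintro (a | a) - (b | b) - hab
    · exact hG a b (fun h => hab (congrArg Sum.inl h))
    · trivial
    · trivial
    · exact fun h => hab (congrArg Sum.inr h)

lemma chi_join_succ_le (G : SimpleGraph V) (p : ℕ) :
    chiDP (joinComplete G (p + 1)) ≤ chiDP (joinComplete G p) + 1 := by
  apply Nat.sInf_le
  intro W iW H L hcov hcard
  set m := chiDP (joinComplete G p) with hm
  have hLlast : (L (Sum.inr (Fin.last p))).Nonempty := by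
    rw [← Finset.card_pos, hcard]; omega
  obtain ⟨x, hx⟩ := hLlast
  set e : V ⊕ Fin p → V ⊕ Fin (p + 1) := Sum.map id Fin.castSucc with he
  have hinj : Function.Injective e :=
    Function.injective_id.sumMap (Fin.castSucc_injective p)
  have hadj : ∀ u v, (joinComplete G p).Adj u v ↔
      (joinComplete G (p + 1)).Adj (e u) (e v) := by
    rintro (a | a) (b | b)
    · exact Iff.rfl
    · exact Iff.rfl
    · exact Iff.rfl
    · simp only [he, Sum.map, join_adj_inr_inr]
      exact (Fin.castSucc_inj).symm.not
  have hlastne : ∀ v, e v ≠ Sum.inr (Fin.last p) := by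
    rintro (a | a) h
    · exact absurd h (by simp [he])
    · have : a.castSucc = Fin.last p := Sum.inr_injective h
      exact absurd this (Fin.castSucc_lt_last a).ne
  have hadjlast : ∀ v, (joinComplete G (p + 1)).Adj (Sum.inr (Fin.last p)) (e v) := by
    rintro (a | a)
    · trivial
    · exact fun h => (Fin.castSucc_lt_last a).ne h.symm
  have hKex : ∀ v : V ⊕ Fin p, ∃ K : Finset W,
      K ⊆ (L (e v)).filter (fun b => ¬ H.Adj x b) ∧ K.card = m := by
    intro v
    have hblock : ((L (e v)).filter (fun b => H.Adj x b)).card ≤ 1 := by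
      apply Finset.card_le_one.mpr
      intro b hb b' hb'
      rw [Finset.mem_filter] at hb hb'
      exact hcov.matching (hadjlast v) x hx b hb.1 b' hb'.1 hb.2 hb'.2
    have hsplit := Finset.card_filter_add_card_filter_not
      (s := L (e v)) (p := fun b => H.Adj x b)
    have : m ≤ ((L (e v)).filter (fun b => ¬ H.Adj x b)).card := by
      have := hcard (e v); omega
    obtain ⟨K, hK1, hK2⟩ := Finset.exists_subset_card_eq this
    exact ⟨K, hK1, hK2⟩
  choose K hK1 hK2 using hKex
  obtain ⟨S, hSind, hScard, hSsupp⟩ := subcover_indep e hinj hadj hcov K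
    (fun v => (hK1 v).trans (Finset.filter_subset _ _)) hK2 (chiDP_mem _)
  have hxS : x ∉ S := by
    intro h
    obtain ⟨v, hv⟩ := hSsupp x h
    have hxL : x ∈ L (e v) := (hK1 v).trans (Finset.filter_subset _ _) hv
    exact hlastne v ((vertOf_eq hcov hxL).symm.trans (vertOf_eq hcov hx))
  have hxfree : ∀ w ∈ S, ¬ H.Adj x w := by
    intro w hw
    obtain ⟨v, hv⟩ := hSsupp w hw
    exact (Finset.mem_filter.mp (hK1 v hv)).2
  refine ⟨insert x S, ?_, ?_⟩
  · intro a ha b hb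
    rcases Finset.mem_insert.mp ha with rfl | ha' <;>
      rcases Finset.mem_insert.mp hb with rfl | hb'
    · exact H.irrefl
    · exact hxfree b hb'
    · exact fun h => hxfree a ha' (h.symm)
    · exact hSind a ha' b hb'
  · rw [Finset.card_insert_of_notMem hxS, hScard, Fintype.card_sum, Fintype.card_sum,
      Fintype.card_fin, Fintype.card_fin]
    omega

lemma exists_stable (G : SimpleGraph V) :
    ∃ p₁ c : ℕ, ∀ q, p₁ ≤ q → chiDP (joinComplete G q) = q + c := by
  set f : ℕ → ℕ := fun q => chiDP (joinComplete G q) - q with hf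
  have hstep : ∀ q, f (q + 1) ≤ f q := by
    intro q
    have h1 := chi_join_succ_le G q
    have h2 := chi_join_ge G q
    have h3 := chi_join_ge G (q + 1)
    simp only [hf]
    omega
  have hanti : ∀ a b, a ≤ b → f b ≤ f a := by
    intro a b hab
    induction b, hab using Nat.le_induction with
    | base => exact le_rfl
    | succ b hab ih => exact (hstep b).trans ih
  have hne : Set.Nonempty (Set.range f) := ⟨f 0, 0, rfl⟩
  obtain ⟨p₁, hp₁⟩ := Nat.sInf_mem hne
  refine ⟨p₁, f p₁, ?_⟩
  intro q hq
  have h1 : f q ≤ f p₁ := hanti _ _ hq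
  have h2 : sInf (Set.range f) ≤ f q := Nat.sInf_le ⟨q, rfl⟩
  have h3 : f q = f p₁ := le_antisymm h1 (hp₁ ▸ h2)
  have h4 := chi_join_ge G q
  simp only [hf] at h3 ⊢
  omega

end Aux

/-- For any graph `G`, there exists a positive integer `p` such that `G ∨ K_p` is
partially DP-nice. -/
theorem exists_joinComplete_partiallyDPNice {V : Type} [Fintype V] (G : SimpleGraph V) :
    ∃ p : ℕ, 0 < p ∧ PartiallyDPNice (joinComplete G p) := by
  classical
  obtain ⟨n, hn⟩ : ∃ n, n = Fintype.card V := ⟨_, rfl⟩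
  by_cases hcomp : ∀ u v : V, u ≠ v → G.Adj u v
  · -- G is complete: the join is a complete graph and greedy suffices
    refine ⟨1, one_pos, ?_⟩
    intro t ht1 ht2
    have hchi : chiDP (joinComplete G 1) = n + 1 := by
      rw [chi_join_complete G hcomp 1, hn]
    have hcard : Fintype.card (V ⊕ Fin 1) = n + 1 := by
      rw [Fintype.card_sum, Fintype.card_fin, hn]
    have halpha : min (n + 1) t ≤ alphaDP (joinComplete G 1) t := by
      have := alphaDP_ge_min (joinComplete G 1) t
      rwa [hcard] at this
    rw [hchi] at ht2
    have hmin : min (n + 1) t = t := min_eq_right ht2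
    have hα : (t : ℚ) ≤ (alphaDP (joinComplete G 1) t : ℚ) := by
      exact_mod_cast hmin ▸ halpha
    rw [hcard, hchi, mul_div_assoc, div_self (by positivity), mul_one]
    exact hα
  · push_neg at hcomp
    obtain ⟨u, v, huv, hnadj⟩ := hcomp
    obtain ⟨p₁, c, hstable⟩ := exists_stable G
    obtain ⟨X, hX⟩ : ∃ X, X = (c + p₁ + 1) * (n + 1) := ⟨_, rfl⟩
    have hXn : (c + p₁) * n ≤ X := hX ▸ Nat.mul_le_mul (by omega) (by omega)
    obtain ⟨p, hp⟩ : ∃ p, p = p₁ + X + 1 := ⟨_, rfl⟩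
    have hp₁p : p₁ ≤ p := by omega
    have hchi : chiDP (joinComplete G p) = p + c := hstable p hp₁p
    have hcle : c ≤ n := by
      have := chi_join_card_sum G p
      rw [← hn] at this
      omega
    have hcardV' : Fintype.card (V ⊕ Fin p) = n + p := by
      rw [Fintype.card_sum, Fintype.card_fin, hn]
    refine ⟨p, by omega, ?_⟩
    intro t ht1 ht2
    have hchipos : (0 : ℚ) < (chiDP (joinComplete G p) : ℚ) := by
      have : (1 : ℕ) ≤ chiDP (joinComplete G p) := le_trans ht1 ht2
      exact_mod_cast Nat.lt_of_lt_of_le Nat.zero_lt_one this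
    rw [div_le_iff₀ hchipos, hcardV', hchi]
    rw [hchi] at ht2
    have hpc : (0 : ℚ) ≤ (p : ℚ) + c := by positivity
    by_cases hcase : c + p₁ ≤ t
    · -- large t: restrict any cover to a sub-join on which t is the DP-chromatic number
      obtain ⟨q, hq⟩ : ∃ q, q = t - c := ⟨_, rfl⟩
      have hqc : t = q + c := by omega
      have hqp₁ : p₁ ≤ q := by omega
      have hqp : q ≤ p := by omega
      have hchiq : chiDP (joinComplete G q) = q + c := hstable q hqp₁
      have halpha : n + q ≤ alphaDP (joinComplete G p) t := by
        apply le_alphaDP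
        intro W iW H L hcov hcards
        have hmem := chiDP_mem (joinComplete G q)
        rw [hchiq] at hmem
        have hqct : q + c = t := hqc.symm
        rw [hqct] at hmem
        obtain ⟨S, hSind, hScard, -⟩ := subcover_indep
          (Sum.map (id : V → V) (Fin.castLE hqp))
          (Function.injective_id.sumMap (Fin.castLE_injective hqp))
          (by
            rintro (a | a) (b | b)
            · exact Iff.rfl
            · exact Iff.rfl
            · exact Iff.rfl
            · exact ((Fin.castLE_injective hqp).ne_iff).symm)
          hcov (fun w => L (Sum.map id (Fin.castLE hqp) w))
          (fun w => subset_rfl) (fun w => hcards _) hmem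
        refine ⟨S, hSind, ?_⟩
        rw [hScard, Fintype.card_sum, Fintype.card_fin, hn]
      have hα : ((n : ℚ) + q) ≤ (alphaDP (joinComplete G p) t : ℚ) := by
        exact_mod_cast halpha
      have h1 : (0 : ℚ) ≤ ((p : ℚ) - q) * ((n : ℚ) - c) :=
        mul_nonneg (sub_nonneg.mpr (by exact_mod_cast hqp))
          (sub_nonneg.mpr (by exact_mod_cast hcle))
      have htq : (t : ℚ) = (q : ℚ) + c := by exact_mod_cast hqc
      have hkey := mul_le_mul_of_nonneg_right hα hpc
      push_cast
      nlinarith [hkey, h1, htq]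
    · -- small t: greedy with a non-adjacent pair
      have hnadj' : ¬ (joinComplete G p).Adj (Sum.inl u) (Sum.inl v) := hnadj
      have hpair : min (n + p) (t + 1) ≤ alphaDP (joinComplete G p) t := by
        have := alphaDP_ge_pair (G' := joinComplete G p)
          (fun h => huv (Sum.inl_injective h)) hnadj' t ht1
        rwa [hcardV'] at this
      have ht2' : (t : ℚ) ≤ ((p : ℚ) + c) := by exact_mod_cast ht2
      rcases min_cases (n + p) (t + 1) with ⟨hmin, hle⟩ | ⟨hmin, hlt⟩
      · -- α ≥ n + p
        rw [hmin] at hpair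
        have hα : ((n : ℚ) + p) ≤ (alphaDP (joinComplete G p) t : ℚ) := by
          exact_mod_cast hpair
        have hnp : (0 : ℚ) ≤ (n : ℚ) + p := by positivity
        have hkey := mul_le_mul_of_nonneg_right hα hpc
        have hkey2 := mul_le_mul_of_nonneg_left ht2' hnp
        push_cast
        nlinarith [hkey, hkey2]
      · -- α ≥ t + 1 and t * n ≤ p
        rw [hmin] at hpair
        have htn : t * n ≤ p := by
          have h1 : t * n ≤ (c + p₁) * n := Nat.mul_le_mul_right n (by omega)
          omega
        have hα : ((t : ℚ) + 1) ≤ (alphaDP (joinComplete G p) t : ℚ) := by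
          exact_mod_cast hpair
        have htn' : (t : ℚ) * n ≤ (p : ℚ) := by exact_mod_cast htn
        have hc0 : (0 : ℚ) ≤ (c : ℚ) := Nat.cast_nonneg c
        have htc : (0 : ℚ) ≤ (t : ℚ) * c :=
          mul_nonneg (Nat.cast_nonneg t) hc0
        have hkey := mul_le_mul_of_nonneg_right hα hpc
        push_cast
        nlinarith [hkey, htn', hc0, htc]
end
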